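/- arXiv:1103.4453 — 2 statements merged into one kernel-verified Lean document; each statement's English description precedes it below -/
import Mathlib

section
/- For a random walk $(S_n)$ on $\mathbb{Z}^d$ with i.i.d. increments, the range $R_n = \#\{S_0,\dots,S_{n-1}\}$ satisfies the subadditivity property: for all natural numbers $a, b$, $\mathbb{P}(R_n \ge a + b) \le \mathbb{P}(R_n \ge a)\,\mathbb{P}(R_n \ge b)$. -/
open MeasureTheory ProbabilityTheory

namespace RangeSubaddAux

variable {Ω : Type*} [MeasurableSpace Ω] {d : ℕ}

/-- The number of distinct points visited by the partial-sum walk with steps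
`X k, X (k+1), ...` during the first `m` times (starting at `0`). -/
def qfun (d : ℕ) (X : ℕ → Ω → (Fin d → ℤ)) (k m : ℕ) (ω : Ω) : ℕ :=
  ((Finset.range m).image fun j => ∑ i ∈ Finset.range j, X (k + i) ω).card

/-- The same quantity as a function of a finite vector of steps. -/
def rangeCard (d m : ℕ) (v : Fin m → (Fin d → ℤ)) : ℕ :=
  ((Finset.range m).image fun j =>
    ∑ i ∈ Finset.range j, if h : i < m then v ⟨i, h⟩ else 0).card

lemma rangeCard_comp (m : ℕ) (f : ℕ → Fin d → ℤ) :
    rangeCard d m (fun i : Fin m => f i) =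
      ((Finset.range m).image fun j => ∑ i ∈ Finset.range j, f i).card := by
  unfold rangeCard
  congr 1
  refine Finset.image_congr fun j hj => ?_
  simp only [Finset.coe_range, Set.mem_Iio] at hj
  refine Finset.sum_congr rfl fun i hi => ?_
  rw [dif_pos (lt_trans (Finset.mem_range.1 hi) hj)]

lemma qfun_eq_rangeCard (X : ℕ → Ω → (Fin d → ℤ)) (k m : ℕ) (ω : Ω) :
    qfun d X k m ω = rangeCard d m (fun i : Fin m => X (k + i) ω) :=
  (rangeCard_comp m fun i => X (k + i) ω).symm

lemma qfun_measurable (X : ℕ → Ω → (Fin d → ℤ)) (hmeas : ∀ k, Measurable (X k))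
    (k m : ℕ) : Measurable (qfun d X k m) := by
  have h : qfun d X k m = (rangeCard d m) ∘ (fun ω (i : Fin m) => X (k + i) ω) :=
    funext fun ω => qfun_eq_rangeCard X k m ω
  rw [h]
  exact Measurable.of_discrete.comp (measurable_pi_lambda _ fun i => hmeas _)

lemma qfun_mono (X : ℕ → Ω → (Fin d → ℤ)) (k : ℕ) {m m' : ℕ} (h : m ≤ m') (ω : Ω) :
    qfun d X k m ω ≤ qfun d X k m' ω :=
  Finset.card_le_card (Finset.image_subset_image (Finset.range_subset_range.2 h))

lemma qfun_zero (X : ℕ → Ω → (Fin d → ℤ)) (k : ℕ) (ω : Ω) : qfun d X k 0 ω = 0 := by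
  simp [qfun]

lemma qfun_step (X : ℕ → Ω → (Fin d → ℤ)) (k m : ℕ) (ω : Ω) :
    qfun d X k (m + 1) ω ≤ qfun d X k m ω + 1 := by
  unfold qfun
  rw [Finset.range_add_one, Finset.image_insert]
  exact Finset.card_insert_le _ _

/-- Joint distribution of finitely many of the `X`'s at singletons, via independence. -/
lemma joint_singleton {μ : Measure Ω} {X : ℕ → Ω → (Fin d → ℤ)}
    (hindep : iIndepFun X μ)
    (k m : ℕ) (y : ℕ → (Fin d → ℤ)) :
    μ {ω | ∀ j < m, X (k + j) ω = y j}
      = ∏ j ∈ Finset.range m, μ (X (k + j) ⁻¹' {y j}) := by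
  classical
  have h := (iIndepFun_iff_measure_inter_preimage_eq_mul.1 hindep)
    ((Finset.range m).image fun j => k + j)
    (sets := fun i => if k ≤ i ∧ i - k < m then {y (i - k)} else Set.univ)
    (fun i _ => MeasurableSet.of_discrete)
  have hset : (⋂ i ∈ (Finset.range m).image (fun j => k + j),
      X i ⁻¹' (if k ≤ i ∧ i - k < m then {y (i - k)} else Set.univ))
      = {ω | ∀ j < m, X (k + j) ω = y j} := by
    ext ω
    simp only [Set.mem_iInter, Finset.mem_image, Finset.mem_range, Set.mem_setOf_eq]
    constructor
    · intro hω j hj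
      have h2 := hω (k + j) ⟨j, hj, rfl⟩
      rw [if_pos ⟨Nat.le_add_right _ _, by omega⟩, Nat.add_sub_cancel_left] at h2
      exact h2
    · rintro hω i ⟨j, hj, rfl⟩
      rw [if_pos ⟨Nat.le_add_right _ _, by omega⟩, Nat.add_sub_cancel_left]
      exact hω j hj
  have hprod : (∏ i ∈ (Finset.range m).image (fun j => k + j),
      μ (X i ⁻¹' (if k ≤ i ∧ i - k < m then {y (i - k)} else Set.univ)))
      = ∏ j ∈ Finset.range m, μ (X (k + j) ⁻¹' {y j}) := by
    rw [Finset.prod_image (fun x _ z _ h => Nat.add_left_cancel h)]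
    refine Finset.prod_congr rfl fun j hj => ?_
    have hj' := Finset.mem_range.1 hj
    rw [if_pos ⟨Nat.le_add_right _ _, by omega⟩, Nat.add_sub_cancel_left]
  rw [← hset, ← hprod]
  exact h

/-- The vector `(X k, ..., X (k+m-1))` has the same law as `(X 1, ..., X m)`. -/
lemma ident_tuple {μ : Measure Ω} {X : ℕ → Ω → (Fin d → ℤ)}
    (hmeas : ∀ k, Measurable (X k))
    (hindep : iIndepFun X μ)
    (hident : ∀ i j, IdentDistrib (X i) (X j) μ μ)
    (k m : ℕ) :
    IdentDistrib (fun ω (i : Fin m) => X (k + i) ω)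
      (fun ω (i : Fin m) => X (1 + i) ω) μ μ := by
  have hVk : ∀ k', Measurable (fun ω (i : Fin m) => X (k' + i) ω) :=
    fun k' => measurable_pi_lambda _ fun i => hmeas _
  refine ⟨(hVk k).aemeasurable, (hVk 1).aemeasurable, ?_⟩
  refine Measure.ext_of_singleton fun z => ?_
  rw [Measure.map_apply (hVk k) (measurableSet_singleton z),
      Measure.map_apply (hVk 1) (measurableSet_singleton z)]
  have hpre : ∀ k', (fun ω (i : Fin m) => X (k' + i) ω) ⁻¹' {z}
      = {ω | ∀ j < m, X (k' + j) ω
          = (fun j => if h : j < m then z ⟨j, h⟩ else 0) j} := by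
    intro k'
    ext ω
    simp only [Set.mem_preimage, Set.mem_singleton_iff, funext_iff, Fin.forall_iff,
      Set.mem_setOf_eq]
    constructor
    · intro h j hj; rw [dif_pos hj]; exact h j hj
    · intro h j hj; have h2 := h j hj; rwa [dif_pos hj] at h2
  rw [hpre, hpre, joint_singleton hindep, joint_singleton hindep]
  exact Finset.prod_congr rfl fun j _ =>
    (hident (k + j) (1 + j)).measure_mem_eq (measurableSet_singleton _)

lemma qfun_ident {μ : Measure Ω} {X : ℕ → Ω → (Fin d → ℤ)}
    (hmeas : ∀ k, Measurable (X k))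
    (hindep : iIndepFun X μ)
    (hident : ∀ i j, IdentDistrib (X i) (X j) μ μ)
    (k m : ℕ) :
    IdentDistrib (qfun d X k m) (qfun d X 1 m) μ μ := by
  have h := (ident_tuple hmeas hindep hident k m).comp
    (Measurable.of_discrete (f := rangeCard d m))
  have h1 : rangeCard d m ∘ (fun ω (i : Fin m) => X (k + i) ω) = qfun d X k m :=
    funext fun ω => (qfun_eq_rangeCard X k m ω).symm
  have h2 : rangeCard d m ∘ (fun ω (i : Fin m) => X (1 + i) ω) = qfun d X 1 m :=
    funext fun ω => (qfun_eq_rangeCard X 1 m ω).symm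
  rwa [h1, h2] at h

/-- Covering bound: the points visited up to time `n` are covered by the first `k`
points together with the points visited from time `k-1` on. -/
lemma qfun_cover (X : ℕ → Ω → (Fin d → ℤ)) {k : ℕ} (hk : 1 ≤ k) (n : ℕ) (ω : Ω) :
    qfun d X 1 n ω ≤ qfun d X 1 k ω + qfun d X k (n - k + 1) ω := by
  have hS : ∀ t, (∑ i ∈ Finset.range t, X (1 + i) ω) = ∑ i ∈ Finset.range t, X (i + 1) ω :=
    fun t => Finset.sum_congr rfl fun i _ => by rw [Nat.add_comm]
  -- walk positions
  set s : ℕ → (Fin d → ℤ) := fun t => ∑ i ∈ Finset.range t, X (1 + i) ω with hs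
  have hshift : ∀ j, (∑ i ∈ Finset.range j, X (k + i) ω) = s (k - 1 + j) - s (k - 1) := by
    intro j
    have h0 : ∀ t, s t = ∑ i ∈ Finset.range t, X (1 + i) ω := fun t => rfl
    have hsum : s (k - 1 + j) = s (k - 1) + ∑ i ∈ Finset.range j, X (k + i) ω := by
      rw [h0 (k - 1 + j), h0 (k - 1), Finset.sum_range_add]
      congr 1
      refine Finset.sum_congr rfl fun i _ => ?_
      rw [show 1 + (k - 1 + i) = k + i by omega]
    rw [hsum]
    abel
  have hq3 : qfun d X k (n - k + 1) ω
      = ((Finset.range (n - k + 1)).image fun j => s (k - 1 + j)).card := by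
    unfold qfun
    have himg : ((Finset.range (n - k + 1)).image fun j => ∑ i ∈ Finset.range j, X (k + i) ω)
        = ((Finset.range (n - k + 1)).image fun j => s (k - 1 + j)).image
            (fun x => x - s (k - 1)) := by
      rw [Finset.image_image]
      exact Finset.image_congr fun j _ => hshift j
    rw [himg]
    exact Finset.card_image_of_injective _
      (fun x y h => by simpa using congrArg (fun z => z + s (k - 1)) h)
  have hsub : (Finset.range n).image s ⊆
      ((Finset.range k).image s) ∪ ((Finset.range (n - k + 1)).image fun j => s (k - 1 + j)) := by
    intro x hx
    obtain ⟨t, ht, rfl⟩ := Finset.mem_image.1 hx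
    have ht' := Finset.mem_range.1 ht
    rw [Finset.mem_union]
    rcases lt_or_ge t k with h | h
    · exact Or.inl (Finset.mem_image.2 ⟨t, Finset.mem_range.2 h, rfl⟩)
    · refine Or.inr (Finset.mem_image.2 ⟨t - k + 1,
        Finset.mem_range.2 (show t - k + 1 < n - k + 1 by omega), ?_⟩)
      show s (k - 1 + (t - k + 1)) = s t
      rw [show k - 1 + (t - k + 1) = t by omega]
  calc qfun d X 1 n ω = ((Finset.range n).image s).card := rfl
    _ ≤ (((Finset.range k).image s) ∪
          ((Finset.range (n - k + 1)).image fun j => s (k - 1 + j))).card :=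
        Finset.card_le_card hsub
    _ ≤ ((Finset.range k).image s).card
          + ((Finset.range (n - k + 1)).image fun j => s (k - 1 + j)).card :=
        Finset.card_union_le _ _
    _ = qfun d X 1 k ω + qfun d X k (n - k + 1) ω := by rw [hq3]; rfl

def rrA (d k j : ℕ) (v : (i : (Finset.range k : Finset ℕ)) → (Fin d → ℤ)) : ℕ :=
  ((Finset.range j).image fun t => ∑ i ∈ Finset.range t,
    if h : i + 1 ∈ Finset.range k then v ⟨i + 1, h⟩ else 0).card

lemma rrA_eq (X : ℕ → Ω → (Fin d → ℤ)) {k j : ℕ} (hj : j ≤ k) (ω : Ω) :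
    rrA d k j (fun i : (Finset.range k : Finset ℕ) => X i ω) = qfun d X 1 j ω := by
  unfold rrA qfun
  refine congrArg Finset.card (Finset.image_congr fun t ht => ?_)
  simp only [Finset.coe_range, Set.mem_Iio] at ht
  refine Finset.sum_congr rfl fun i hi => ?_
  have hi' : i + 1 ∈ Finset.range k :=
    Finset.mem_range.2 (by have := Finset.mem_range.1 hi; omega)
  rw [dif_pos hi', Nat.add_comm 1 i]

def rrB (d k n m : ℕ) (w : (i : (Finset.Icc k n : Finset ℕ)) → (Fin d → ℤ)) : ℕ :=
  ((Finset.range m).image fun j => ∑ i ∈ Finset.range j,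
    if h : k + i ∈ Finset.Icc k n then w ⟨k + i, h⟩ else 0).card

lemma rrB_eq (X : ℕ → Ω → (Fin d → ℤ)) {k n : ℕ} (hkn : k ≤ n) (ω : Ω) :
    rrB d k n (n - k + 1) (fun i : (Finset.Icc k n : Finset ℕ) => X i ω)
      = qfun d X k (n - k + 1) ω := by
  unfold rrB qfun
  refine congrArg Finset.card (Finset.image_congr fun j hj => ?_)
  simp only [Finset.coe_range, Set.mem_Iio] at hj
  refine Finset.sum_congr rfl fun i hi => ?_
  have hi' : k + i ∈ Finset.Icc k n :=
    Finset.mem_Icc.2 ⟨Nat.le_add_right _ _, by have := Finset.mem_range.1 hi; omega⟩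
  rw [dif_pos hi']

lemma indep_AB {μ : Measure Ω} {X : ℕ → Ω → (Fin d → ℤ)}
    (hmeas : ∀ k, Measurable (X k))
    (hindep : iIndepFun X μ)
    (a b n : ℕ) {k : ℕ} (hk1 : 1 ≤ k) (hkn : k ≤ n) :
    μ ({ω | a ≤ qfun d X 1 k ω ∧ ∀ j < k, qfun d X 1 j ω < a}
        ∩ {ω | b ≤ qfun d X k (n - k + 1) ω})
      = μ {ω | a ≤ qfun d X 1 k ω ∧ ∀ j < k, qfun d X 1 j ω < a}
        * μ {ω | b ≤ qfun d X k (n - k + 1) ω} := by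
  classical
  have hdisj12 : Disjoint (Finset.range k) (Finset.Icc k n) := by
    refine Finset.disjoint_left.2 fun i hi hi' => ?_
    rw [Finset.mem_range] at hi
    rw [Finset.mem_Icc] at hi'
    omega
  have hind := hindep.indepFun_finset (Finset.range k) (Finset.Icc k n) hdisj12 hmeas
  have h := hind.measure_inter_preimage_eq_mul
    (s := {v | a ≤ rrA d k k v ∧ ∀ j < k, rrA d k j v < a})
    (t := {w | b ≤ rrB d k n (n - k + 1) w})
    MeasurableSet.of_discrete MeasurableSet.of_discrete
  have hApre : (fun ω (i : (Finset.range k : Finset ℕ)) => X i ω) ⁻¹'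
      {v | a ≤ rrA d k k v ∧ ∀ j < k, rrA d k j v < a}
      = {ω | a ≤ qfun d X 1 k ω ∧ ∀ j < k, qfun d X 1 j ω < a} := by
    ext ω
    simp only [Set.mem_preimage, Set.mem_setOf_eq]
    rw [rrA_eq X le_rfl ω]
    constructor
    · rintro ⟨h1, h2⟩
      exact ⟨h1, fun j hj => by have := h2 j hj; rwa [rrA_eq X hj.le ω] at this⟩
    · rintro ⟨h1, h2⟩
      exact ⟨h1, fun j hj => by rw [rrA_eq X hj.le ω]; exact h2 j hj⟩
  have hBpre : (fun ω (i : (Finset.Icc k n : Finset ℕ)) => X i ω) ⁻¹'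
      {w | b ≤ rrB d k n (n - k + 1) w}
      = {ω | b ≤ qfun d X k (n - k + 1) ω} := by
    ext ω
    simp only [Set.mem_preimage, Set.mem_setOf_eq]
    rw [rrB_eq X hkn ω]
  rwa [hApre, hBpre] at h

end RangeSubaddAux

open RangeSubaddAux

/-- Subadditivity of the range of a random walk with i.i.d. increments:
`P(R_n ≥ a + b) ≤ P(R_n ≥ a) * P(R_n ≥ b)`. -/
theorem range_subadditive
    {Ω : Type*} [MeasurableSpace Ω] (μ : Measure Ω) [IsProbabilityMeasure μ]
    (d : ℕ) (X : ℕ → Ω → (Fin d → ℤ))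
    (hmeas : ∀ k, Measurable (X k))
    (hindep : iIndepFun X μ)
    (hident : ∀ i j, IdentDistrib (X i) (X j) μ μ)
    (S : ℕ → Ω → (Fin d → ℤ))
    (hS : ∀ n ω, S n ω = ∑ k ∈ Finset.range n, X (k + 1) ω)
    (R : ℕ → Ω → ℕ)
    (hR : ∀ n ω, R n ω = ((Finset.range n).image (fun k => S k ω)).card)
    (n : ℕ) (a b : ℕ) :
    μ {ω | a + b ≤ R n ω} ≤ μ {ω | a ≤ R n ω} * μ {ω | b ≤ R n ω} := by
  classical
  -- identify R with qfun
  have hRq : ∀ m ω, R m ω = qfun d X 1 m ω := by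
    intro m ω
    rw [hR]
    unfold qfun
    congr 1
    refine Finset.image_congr fun t _ => ?_
    rw [hS]
    exact Finset.sum_congr rfl fun i _ => by rw [Nat.add_comm]
  -- trivial cases
  rcases Nat.eq_zero_or_pos a with ha | ha
  · subst ha
    have h1 : {ω : Ω | 0 ≤ R n ω} = Set.univ := by
      ext ω; simp
    rw [h1, measure_univ, one_mul, Nat.zero_add]
  rcases Nat.eq_zero_or_pos b with hb | hb
  · subst hb
    have h1 : {ω : Ω | 0 ≤ R n ω} = Set.univ := by
      ext ω; simp
    rw [h1, measure_univ, mul_one, Nat.add_zero]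
  -- events
  set A : ℕ → Set Ω := fun k =>
    {ω | a ≤ qfun d X 1 k ω ∧ ∀ j < k, qfun d X 1 j ω < a} with hAdef
  set B : ℕ → Set Ω := fun k => {ω | b ≤ qfun d X k (n - k + 1) ω} with hBdef
  have hAmeas : ∀ k, MeasurableSet (A k) := by
    intro k
    have hAeq : A k = (qfun d X 1 k ⁻¹' {x | a ≤ x})
        ∩ ⋂ j ∈ Set.Iio k, (qfun d X 1 j ⁻¹' {x | x < a}) := by
      ext ω; simp [hAdef]
    rw [hAeq]
    exact ((qfun_measurable X hmeas 1 k) MeasurableSet.of_discrete).inter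
      (MeasurableSet.biInter (Set.to_countable _)
        fun j _ => (qfun_measurable X hmeas 1 j) MeasurableSet.of_discrete)
  have hBmeas : ∀ k, MeasurableSet (B k) := fun k =>
    (qfun_measurable X hmeas k (n - k + 1)) MeasurableSet.of_discrete
  -- bound on the B-probability
  have hBle : ∀ k, 1 ≤ k → k ≤ n → μ (B k) ≤ μ {ω | b ≤ R n ω} := by
    intro k hk1 hkn
    have hid := qfun_ident (μ := μ) hmeas hindep hident k (n - k + 1)
    have h1 : μ (B k) = μ {ω | b ≤ qfun d X 1 (n - k + 1) ω} := by
      have h2 := hid.measure_mem_eq (s := {x : ℕ | b ≤ x}) MeasurableSet.of_discrete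
      rw [hBdef]
      exact h2
    rw [h1]
    refine measure_mono fun ω hω => ?_
    simp only [Set.mem_setOf_eq] at hω ⊢
    rw [hRq]
    exact le_trans hω (qfun_mono X 1 (by omega) ω)
  -- covering
  have hcover : {ω | a + b ≤ R n ω} ⊆ ⋃ k ∈ Finset.Icc 1 n, A k ∩ B k := by
    intro ω hω
    have hω' : a + b ≤ qfun d X 1 n ω := by
      have := Set.mem_setOf_eq ▸ hω
      rwa [hRq] at this
    have hex : ∃ k, a ≤ qfun d X 1 k ω := ⟨n, by omega⟩
    have hK := Nat.find_spec hex
    have hKmin : ∀ j < Nat.find hex, qfun d X 1 j ω < a :=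
      fun j hj => lt_of_not_ge (Nat.find_min hex hj)
    set K := Nat.find hex with hKdef
    have hK1 : 1 ≤ K := by
      by_contra hcon
      have hK0 : K = 0 := by omega
      rw [hK0, qfun_zero] at hK
      omega
    have hKn : K ≤ n := Nat.find_le (by omega)
    have hb2 : b ≤ qfun d X K (n - K + 1) ω := by
      have hRK : qfun d X 1 K ω = a := by
        have h1 : qfun d X 1 K ω ≤ qfun d X 1 (K - 1) ω + 1 := by
          have h2 := qfun_step X 1 (K - 1) ω
          rwa [Nat.sub_add_cancel hK1] at h2
        have h2 := hKmin (K - 1) (by omega)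
        omega
      have h3 := qfun_cover X hK1 n ω
      omega
    exact Set.mem_iUnion₂.2 ⟨K, Finset.mem_Icc.2 ⟨hK1, hKn⟩, ⟨hK, hKmin⟩, hb2⟩
  -- pairwise disjointness
  have hdisjA : (↑(Finset.Icc 1 n) : Set ℕ).PairwiseDisjoint A := by
    intro k _ k' _ hne
    refine Set.disjoint_left.2 fun ω h1 h2 => ?_
    rcases lt_or_gt_of_ne hne with h | h
    · exact absurd h1.1 (not_le.2 (h2.2 k h))
    · exact absurd h2.1 (not_le.2 (h1.2 k' h))
  have hdisjAB : (↑(Finset.Icc 1 n) : Set ℕ).PairwiseDisjoint (fun k => A k ∩ B k) := by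
    intro k hk k' hk' hne
    exact (hdisjA hk hk' hne).mono Set.inter_subset_left Set.inter_subset_left
  have hAsub : (⋃ k ∈ Finset.Icc 1 n, A k) ⊆ {ω | a ≤ R n ω} := by
    intro ω hω
    obtain ⟨k, hk, hA⟩ := Set.mem_iUnion₂.1 hω
    obtain ⟨hk1, hkn⟩ := Finset.mem_Icc.1 hk
    have : a ≤ qfun d X 1 k ω := hA.1
    simp only [Set.mem_setOf_eq]
    rw [hRq]
    exact le_trans this (qfun_mono X 1 hkn ω)
  calc μ {ω | a + b ≤ R n ω}
      ≤ μ (⋃ k ∈ Finset.Icc 1 n, A k ∩ B k) := measure_mono hcover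
    _ = ∑ k ∈ Finset.Icc 1 n, μ (A k ∩ B k) :=
        measure_biUnion_finset hdisjAB fun k _ => (hAmeas k).inter (hBmeas k)
    _ = ∑ k ∈ Finset.Icc 1 n, μ (A k) * μ (B k) := by
        refine Finset.sum_congr rfl fun k hk => ?_
        obtain ⟨hk1, hkn⟩ := Finset.mem_Icc.1 hk
        exact indep_AB hmeas hindep a b n hk1 hkn
    _ ≤ ∑ k ∈ Finset.Icc 1 n, μ (A k) * μ {ω | b ≤ R n ω} := by
        refine Finset.sum_le_sum fun k hk => ?_
        obtain ⟨hk1, hkn⟩ := Finset.mem_Icc.1 hk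
        exact mul_le_mul_right (hBle k hk1 hkn) _
    _ = (∑ k ∈ Finset.Icc 1 n, μ (A k)) * μ {ω | b ≤ R n ω} :=
        (Finset.sum_mul _ _ _).symm
    _ = μ (⋃ k ∈ Finset.Icc 1 n, A k) * μ {ω | b ≤ R n ω} := by
        rw [measure_biUnion_finset hdisjA fun k _ => hAmeas k]
    _ ≤ μ {ω | a ≤ R n ω} * μ {ω | b ≤ R n ω} :=
        mul_le_mul_left (measure_mono hAsub) _
end

section
/- Let $(S_n)$ be a random walk on $\mathbb{Z}^d$ with i.i.d. increments and local times $N_n(x)$. For every $x \in \mathbb{Z}^d$ and $n \ge 1$, $N_n(S_k)$ has the same distribution as $N_{k+1}(0) + N'_{n-k}(0) - 1$, where $N'$ is the local time process of an independent copy of the walk. Consequently $\mathbb{E}[\exp(c N_n(S_k)/\log n)] \le \mathbb{E}[\exp(c N_n(0)/\log n)]^2$ for every $c > 0$ and $0 \le k \le n-1$. -/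
open MeasureTheory ProbabilityTheory

instance sumMSC {α β : Type*} [MeasurableSpace α] [MeasurableSpace β] [MeasurableSingletonClass α]
    [MeasurableSingletonClass β] : MeasurableSingletonClass (α ⊕ β) where
  measurableSet_singleton x := by
    cases x with
    | inl a =>
        have : ({Sum.inl a} : Set (α ⊕ β)) = Sum.inl '' {a} := by simp
        rw [this]; exact (MeasurableSet.singleton a).inl_image
    | inr a =>
        have : ({Sum.inr a} : Set (α ⊕ β)) = Sum.inr '' {a} := by simp
        rw [this]; exact (MeasurableSet.singleton a).inr_image

lemma ident_vec {Ω ι E : Type*} [MeasurableSpace Ω] (μ : Measure Ω) [IsProbabilityMeasure μ]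
    [MeasurableSpace E] [MeasurableSingletonClass E] [Countable E]
    {W : ι → Ω → E} (hW : ∀ i, Measurable (W i))
    (hindep : iIndepFun W μ)
    {m : ℕ} {e f : Fin m → ι} (he : Function.Injective e) (hf : Function.Injective f)
    (hid : ∀ i, IdentDistrib (W (e i)) (W (f i)) μ μ) :
    IdentDistrib (fun ω (i : Fin m) => W (e i) ω) (fun ω (i : Fin m) => W (f i) ω) μ μ := by
  classical
  have hmeas : ∀ (g : Fin m → ι), Measurable (fun ω (i : Fin m) => W (g i) ω) := fun g =>
    measurable_pi_lambda _ (fun i => hW (g i))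
  have key : ∀ (g : Fin m → ι), Function.Injective g →
      ∀ v : Fin m → E, μ ((fun ω (i : Fin m) => W (g i) ω) ⁻¹' {v}) =
        ∏ i : Fin m, μ (W (g i) ⁻¹' {v i}) := by
    intro g hg v
    have hpre : ((fun ω (i : Fin m) => W (g i) ω) ⁻¹' {v}) =
        ⋂ i ∈ (Finset.univ : Finset (Fin m)).image g,
          W i ⁻¹' (Function.extend g (fun j => ({v j} : Set E)) (fun _ => Set.univ) i) := by
      ext ω
      simp only [Set.mem_preimage, Set.mem_singleton_iff, funext_iff, Set.mem_iInter,
        Finset.mem_image, Finset.mem_univ, true_and]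
      constructor
      · rintro h i ⟨j, rfl⟩
        rw [hg.extend_apply]
        exact h j
      · intro h j
        have := h (g j) ⟨j, rfl⟩
        rwa [hg.extend_apply] at this
    rw [hpre, hindep.measure_inter_preimage_eq_mul _ (fun i _ => ?_),
      Finset.prod_image (fun a _ b _ hab => hg hab)]
    · refine Finset.prod_congr rfl (fun j _ => ?_)
      rw [hg.extend_apply]
    · rcases em (∃ j, g j = i) with ⟨j, rfl⟩ | h
      · rw [hg.extend_apply]; exact measurableSet_singleton _
      · rw [Function.extend_apply' _ _ _ h]; exact MeasurableSet.univ
  refine ⟨(hmeas e).aemeasurable, (hmeas f).aemeasurable, ?_⟩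
  apply Measure.ext_of_singleton
  intro v
  rw [Measure.map_apply (hmeas e) (measurableSet_singleton v),
    Measure.map_apply (hmeas f) (measurableSet_singleton v), key e he v, key f hf v]
  exact Finset.prod_congr rfl fun i _ =>
    (hid i).measure_mem_eq (measurableSet_singleton (v i))

lemma revsum {E : Type*} [AddCommGroup E] (x : ℕ → E) (k : ℕ) :
    ∀ j, j ≤ k → ∑ t ∈ Finset.range j, x (k - t) =
      (∑ t ∈ Finset.range k, x (t+1)) - (∑ t ∈ Finset.range (k - j), x (t+1)) := by
  intro j
  induction j with
  | zero => simp
  | succ j ih =>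
      intro hj
      rw [Finset.sum_range_succ, ih (by omega)]
      have h1 : k - j = (k - (j+1)) + 1 := by omega
      rw [h1, Finset.sum_range_succ]
      have h2 : k - (j + 1) + 1 = k - j := by omega
      rw [h2]
      abel

lemma fwdsum {E : Type*} [AddCommGroup E] (x : ℕ → E) (k : ℕ) (j : ℕ) :
    ∑ t ∈ Finset.range j, x (k + t + 1) =
      (∑ t ∈ Finset.range (k + j), x (t+1)) - (∑ t ∈ Finset.range k, x (t+1)) := by
  induction j with
  | zero => simp
  | succ j ih =>
      rw [Finset.sum_range_succ, ih]
      have h1 : k + (j+1) = (k + j) + 1 := by omega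
      rw [h1, Finset.sum_range_succ]
      abel

lemma cardrev (P : ℕ → Prop) [DecidablePred P] (k : ℕ) :
    ((Finset.range (k+1)).filter (fun j => P (k - j))).card =
      ((Finset.range (k+1)).filter P).card := by
  apply Finset.card_bij (fun j _ => k - j)
  · intro a ha
    simp only [Finset.mem_filter, Finset.mem_range] at ha ⊢
    exact ⟨by omega, ha.2⟩
  · intro a ha b hb hab
    simp only [Finset.mem_filter, Finset.mem_range] at ha hb
    omega
  · intro b hb
    simp only [Finset.mem_filter, Finset.mem_range] at hb ⊢
    exact ⟨k - b, ⟨by omega, by rw [show k - (k-b) = b by omega]; exact hb.2⟩, by omega⟩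

lemma cardfwd (P : ℕ → Prop) [DecidablePred P] (k n : ℕ) (hk : k ≤ n) :
    ((Finset.range (n-k)).filter (fun j => P (k + j))).card =
      ((Finset.Ico k n).filter P).card := by
  apply Finset.card_bij (fun j _ => k + j)
  · intro a ha
    simp only [Finset.mem_filter, Finset.mem_range, Finset.mem_Ico] at ha ⊢
    exact ⟨⟨by omega, by omega⟩, ha.2⟩
  · intro a _ b _ hab; omega
  · intro b hb
    simp only [Finset.mem_filter, Finset.mem_range, Finset.mem_Ico] at hb ⊢
    exact ⟨b - k, ⟨by omega, by rw [show k + (b-k) = b by omega]; exact hb.2⟩, by omega⟩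

lemma cardsplit (P : ℕ → Prop) [DecidablePred P] (k n : ℕ) (hk : k < n) (hP : P k) :
    ((Finset.range (k+1)).filter P).card + ((Finset.Ico k n).filter P).card =
      ((Finset.range n).filter P).card + 1 := by
  have h1 : Finset.range n = Finset.range (k+1) ∪ Finset.Ico (k+1) n := by
    ext t; simp only [Finset.mem_range, Finset.mem_union, Finset.mem_Ico]; omega
  have h2 : Finset.Ico k n = insert k (Finset.Ico (k+1) n) := by
    ext t; simp only [Finset.mem_Ico, Finset.mem_insert]; omega
  have hdisj : Disjoint (Finset.range (k+1)) (Finset.Ico (k+1) n) := by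
    simp only [Finset.disjoint_left, Finset.mem_range, Finset.mem_Ico]
    omega
  rw [h1, h2, Finset.filter_union, Finset.card_union_of_disjoint
    (Finset.disjoint_filter_filter hdisj), Finset.filter_insert, if_pos hP,
    Finset.card_insert_of_notMem (by simp)]
  omega

set_option maxHeartbeats 1000000 in
/-- For a random walk with i.i.d. increments `X` and an independent copy with
increments `X'`, the local time `N_n(S_k)` has the same distribution as
`N_{k+1}(0) + N'_{n-k}(0) - 1`, and consequently
`E[exp(c N_n(S_k)/log n)] ≤ E[exp(c N_n(0)/log n)]²` for every `c > 0` and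
`0 ≤ k ≤ n - 1`. -/
theorem local_time_at_walk_identity
    {Ω : Type*} [MeasurableSpace Ω] (μ : Measure Ω) [IsProbabilityMeasure μ]
    (d : ℕ) (X X' : ℕ → Ω → (Fin d → ℤ))
    (hmeas : ∀ i : ℕ ⊕ ℕ, Measurable (Sum.elim X X' i))
    (hindep : iIndepFun (Sum.elim X X') μ)
    (hident : ∀ i j : ℕ ⊕ ℕ, IdentDistrib (Sum.elim X X' i) (Sum.elim X X' j) μ μ)
    (S S' : ℕ → Ω → (Fin d → ℤ))
    (hS : ∀ n ω, S n ω = ∑ j ∈ Finset.range n, X (j + 1) ω)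
    (hS' : ∀ n ω, S' n ω = ∑ j ∈ Finset.range n, X' (j + 1) ω)
    (N N' : ℕ → (Fin d → ℤ) → Ω → ℕ)
    (hN : ∀ n x ω, N n x ω = ((Finset.range n).filter (fun j => S j ω = x)).card)
    (hN' : ∀ n x ω, N' n x ω = ((Finset.range n).filter (fun j => S' j ω = x)).card)
    (n k : ℕ) (hn : 1 ≤ n) (hk : k ≤ n - 1) :
    IdentDistrib (fun ω => N n (S k ω) ω)
        (fun ω => N (k + 1) 0 ω + N' (n - k) 0 ω - 1) μ μ ∧
      ∀ c : ℝ, 0 < c →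
        ∫ ω, Real.exp (c * (N n (S k ω) ω : ℝ) / Real.log n) ∂μ ≤
          (∫ ω, Real.exp (c * (N n 0 ω : ℝ) / Real.log n) ∂μ) ^ (2 : ℕ) := by
  classical
  set W := Sum.elim X X' with hW
  have hXm : ∀ i, Measurable (X i) := fun i => hmeas (Sum.inl i)
  have hX'm : ∀ i, Measurable (X' i) := fun i => hmeas (Sum.inr i)
  have hkn : k + 1 ≤ n := by omega
  -- padding
  set pad : (Fin (n-1) → (Fin d → ℤ)) → ℕ → (Fin d → ℤ) :=
    fun v t => if h : t < n - 1 then v ⟨t, h⟩ else 0 with hpad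
  -- part 1 index maps and functional
  set G : (Fin (n-1) → (Fin d → ℤ)) → ℕ := fun v =>
    ((Finset.range (k+1)).filter (fun j => ∑ t ∈ Finset.range j, pad v t = 0)).card +
    ((Finset.range (n-k)).filter (fun j => ∑ t ∈ Finset.range j, pad v (k + t) = 0)).card
      - 1 with hG
  set e : Fin (n-1) → ℕ ⊕ ℕ :=
    fun i => Sum.inl (if (i:ℕ) < k then k - (i:ℕ) else (i:ℕ) + 1) with he_def
  set f : Fin (n-1) → ℕ ⊕ ℕ :=
    fun i => if (i:ℕ) < k then Sum.inl ((i:ℕ)+1) else Sum.inr ((i:ℕ) - k + 1) with hf_def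
  have he : Function.Injective e := by
    intro i j h
    simp only [he_def, Sum.inl.injEq] at h
    have hi := i.isLt
    have hj := j.isLt
    apply Fin.ext
    split_ifs at h <;> omega
  have hf : Function.Injective f := by
    intro i j h
    simp only [hf_def] at h
    apply Fin.ext
    split_ifs at h <;> simp only [Sum.inl.injEq, Sum.inr.injEq] at h <;>
      first
        | omega
        | exact absurd h (by simp)
  have videntG : IdentDistrib (fun ω (i : Fin (n-1)) => W (e i) ω)
      (fun ω (i : Fin (n-1)) => W (f i) ω) μ μ :=
    ident_vec μ hmeas hindep he hf (fun i => hident _ _)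
  -- pointwise identification, e-side
  have Ge : ∀ ω, G (fun i => W (e i) ω) = N n (S k ω) ω := by
    intro ω
    have hw : ∀ t, t < n - 1 →
        pad (fun i => W (e i) ω) t = X (if t < k then k - t else t + 1) ω := by
      intro t ht
      simp only [hpad, dif_pos ht, he_def, hW]
      rfl
    have hA : ((Finset.range (k+1)).filter
          (fun j => ∑ t ∈ Finset.range j, pad (fun i => W (e i) ω) t = 0)).card =
        ((Finset.range (k+1)).filter (fun j => S j ω = S k ω)).card := by
      rw [← cardrev (fun j => S j ω = S k ω) k]
      congr 1
      apply Finset.filter_congr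
      intro j hj
      simp only [Finset.mem_range] at hj
      have hsum : ∑ t ∈ Finset.range j, pad (fun i => W (e i) ω) t
          = S k ω - S (k - j) ω := by
        rw [Finset.sum_congr rfl (fun t ht => ?_), revsum (fun s => X s ω) k j (by omega),
          ← hS, ← hS]
        · simp only [Finset.mem_range] at ht
          rw [hw t (by omega), if_pos (by omega)]
      rw [hsum, sub_eq_zero]
      constructor
      · intro h; exact h.symm
      · intro h; exact h.symm
    have hB : ((Finset.range (n-k)).filter
          (fun j => ∑ t ∈ Finset.range j, pad (fun i => W (e i) ω) (k + t) = 0)).card =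
        ((Finset.Ico k n).filter (fun j => S j ω = S k ω)).card := by
      rw [← cardfwd (fun j => S j ω = S k ω) k n (by omega)]
      congr 1
      apply Finset.filter_congr
      intro j hj
      simp only [Finset.mem_range] at hj
      have hsum : ∑ t ∈ Finset.range j, pad (fun i => W (e i) ω) (k + t)
          = S (k + j) ω - S k ω := by
        rw [Finset.sum_congr rfl (fun t ht => ?_), fwdsum (fun s => X s ω) k j,
          ← hS, ← hS]
        · simp only [Finset.mem_range] at ht
          rw [hw (k + t) (by omega), if_neg (by omega)]
      rw [hsum, sub_eq_zero]
    simp only [hG]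
    rw [hA, hB, hN]
    rw [cardsplit (fun j => S j ω = S k ω) k n (by omega) rfl]
    omega
  -- pointwise identification, f-side
  have Gf : ∀ ω, G (fun i => W (f i) ω) = N (k+1) 0 ω + N' (n-k) 0 ω - 1 := by
    intro ω
    have hw : ∀ t, t < n - 1 →
        pad (fun i => W (f i) ω) t =
          if t < k then X (t + 1) ω else X' (t - k + 1) ω := by
      intro t ht
      simp only [hpad, dif_pos ht, hf_def, hW]
      split_ifs <;> rfl
    have hA : ((Finset.range (k+1)).filter
          (fun j => ∑ t ∈ Finset.range j, pad (fun i => W (f i) ω) t = 0)).card =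
        N (k+1) 0 ω := by
      rw [hN]
      congr 1
      apply Finset.filter_congr
      intro j hj
      simp only [Finset.mem_range] at hj
      have hsum : ∑ t ∈ Finset.range j, pad (fun i => W (f i) ω) t = S j ω := by
        rw [Finset.sum_congr rfl (fun t ht => ?_), ← hS]
        · simp only [Finset.mem_range] at ht
          rw [hw t (by omega), if_pos (by omega)]
      rw [hsum]
    have hB : ((Finset.range (n-k)).filter
          (fun j => ∑ t ∈ Finset.range j, pad (fun i => W (f i) ω) (k + t) = 0)).card =
        N' (n-k) 0 ω := by
      rw [hN']
      congr 1
      apply Finset.filter_congr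
      intro j hj
      simp only [Finset.mem_range] at hj
      have hsum : ∑ t ∈ Finset.range j, pad (fun i => W (f i) ω) (k + t) = S' j ω := by
        rw [Finset.sum_congr rfl (fun t ht => ?_), ← hS']
        · simp only [Finset.mem_range] at ht
          rw [hw (k + t) (by omega), if_neg (by omega),
            show k + t - k + 1 = t + 1 by omega]
      rw [hsum]
    simp only [hG]
    rw [hA, hB]
  have part1 : IdentDistrib (fun ω => N n (S k ω) ω)
      (fun ω => N (k + 1) 0 ω + N' (n - k) 0 ω - 1) μ μ := by
    have h := videntG.comp (measurable_of_countable G)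
    have h1 : (G ∘ fun ω (i : Fin (n-1)) => W (e i) ω) = fun ω => N n (S k ω) ω :=
      funext Ge
    have h2 : (G ∘ fun ω (i : Fin (n-1)) => W (f i) ω) =
        fun ω => N (k + 1) 0 ω + N' (n - k) 0 ω - 1 := funext Gf
    rwa [h1, h2] at h
  refine ⟨part1, ?_⟩
  -- measurability of basic objects
  have measS : ∀ j, Measurable (fun ω => S j ω) := by
    intro j
    have h : (fun ω => S j ω) = fun ω => ∑ t ∈ Finset.range j, X (t+1) ω := funext (hS j)
    rw [h]
    exact Finset.measurable_sum _ (fun i _ => hXm _)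
  have measS' : ∀ j, Measurable (fun ω => S' j ω) := by
    intro j
    have h : (fun ω => S' j ω) = fun ω => ∑ t ∈ Finset.range j, X' (t+1) ω := funext (hS' j)
    rw [h]
    exact Finset.measurable_sum _ (fun i _ => hX'm _)
  have measN : ∀ a x, Measurable (fun ω => N a x ω) := by
    intro a x
    have h : (fun ω => N a x ω) =
        fun ω => ∑ j ∈ Finset.range a, if S j ω = x then 1 else 0 := by
      funext ω
      rw [hN, Finset.card_filter]
    rw [h]
    refine Finset.measurable_sum _ (fun j _ => Measurable.ite ?_ measurable_const
      measurable_const)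
    exact (measS j) (measurableSet_singleton x)
  have measN' : ∀ a x, Measurable (fun ω => N' a x ω) := by
    intro a x
    have h : (fun ω => N' a x ω) =
        fun ω => ∑ j ∈ Finset.range a, if S' j ω = x then 1 else 0 := by
      funext ω
      rw [hN', Finset.card_filter]
    rw [h]
    refine Finset.measurable_sum _ (fun j _ => Measurable.ite ?_ measurable_const
      measurable_const)
    exact (measS' j) (measurableSet_singleton x)
  -- ident2 : N' n 0 ∼ N n 0
  set G2 : (Fin (n-1) → (Fin d → ℤ)) → ℕ := fun v =>
    ((Finset.range n).filter (fun j => ∑ t ∈ Finset.range j, pad v t = 0)).card with hG2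
  set e2 : Fin (n-1) → ℕ ⊕ ℕ := fun i => Sum.inr ((i:ℕ)+1) with he2_def
  set f2 : Fin (n-1) → ℕ ⊕ ℕ := fun i => Sum.inl ((i:ℕ)+1) with hf2_def
  have he2 : Function.Injective e2 := by
    intro i j h
    simp only [he2_def, Sum.inr.injEq] at h
    exact Fin.ext (by omega)
  have hf2 : Function.Injective f2 := by
    intro i j h
    simp only [hf2_def, Sum.inl.injEq] at h
    exact Fin.ext (by omega)
  have G2e : ∀ ω, G2 (fun i => W (e2 i) ω) = N' n 0 ω := by
    intro ω
    simp only [hG2]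
    rw [hN']
    congr 1
    apply Finset.filter_congr
    intro j hj
    simp only [Finset.mem_range] at hj
    have hsum : ∑ t ∈ Finset.range j, pad (fun i => W (e2 i) ω) t = S' j ω := by
      rw [Finset.sum_congr rfl (fun t ht => ?_), ← hS']
      · simp only [Finset.mem_range] at ht
        simp only [hpad, dif_pos (show t < n - 1 by omega), he2_def, hW]
        rfl
    rw [hsum]
  have G2f : ∀ ω, G2 (fun i => W (f2 i) ω) = N n 0 ω := by
    intro ω
    simp only [hG2]
    rw [hN]
    congr 1
    apply Finset.filter_congr
    intro j hj
    simp only [Finset.mem_range] at hj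
    have hsum : ∑ t ∈ Finset.range j, pad (fun i => W (f2 i) ω) t = S j ω := by
      rw [Finset.sum_congr rfl (fun t ht => ?_), ← hS]
      · simp only [Finset.mem_range] at ht
        simp only [hpad, dif_pos (show t < n - 1 by omega), hf2_def, hW]
        rfl
    rw [hsum]
  have ident2 : IdentDistrib (fun ω => N' n 0 ω) (fun ω => N n 0 ω) μ μ := by
    have h := (ident_vec μ hmeas hindep he2 hf2 (fun i => hident _ _)).comp
      (measurable_of_countable G2)
    have h1 : (G2 ∘ fun ω (i : Fin (n-1)) => W (e2 i) ω) = fun ω => N' n 0 ω := funext G2e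
    have h2 : (G2 ∘ fun ω (i : Fin (n-1)) => W (f2 i) ω) = fun ω => N n 0 ω := funext G2f
    rwa [h1, h2] at h
  -- independence of N n 0 and N' n 0
  have hIndepNN : IndepFun (fun ω => N n 0 ω) (fun ω => N' n 0 ω) μ := by
    set Sfin : Finset (ℕ ⊕ ℕ) :=
      (Finset.range (n-1)).image (fun j => (Sum.inl (j+1) : ℕ ⊕ ℕ)) with hSfin
    set Tfin : Finset (ℕ ⊕ ℕ) :=
      (Finset.range (n-1)).image (fun j => (Sum.inr (j+1) : ℕ ⊕ ℕ)) with hTfin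
    have hdisj : Disjoint Sfin Tfin := by
      simp only [Finset.disjoint_left, hSfin, hTfin, Finset.mem_image, Finset.mem_range]
      rintro a ⟨j, hj, rfl⟩ ⟨j', hj', h⟩
      exact absurd h (by simp)
    have hIF := hindep.indepFun_finset Sfin Tfin hdisj hmeas
    set padS : (↥Sfin → (Fin d → ℤ)) → ℕ → (Fin d → ℤ) := fun u t =>
      if h : (Sum.inl (t+1) : ℕ ⊕ ℕ) ∈ Sfin then u ⟨_, h⟩ else 0 with hpadS
    set padT : (↥Tfin → (Fin d → ℤ)) → ℕ → (Fin d → ℤ) := fun u t =>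
      if h : (Sum.inr (t+1) : ℕ ⊕ ℕ) ∈ Tfin then u ⟨_, h⟩ else 0 with hpadT
    set φ : (↥Sfin → (Fin d → ℤ)) → ℕ := fun u =>
      ((Finset.range n).filter (fun j => ∑ t ∈ Finset.range j, padS u t = 0)).card with hφ
    set ψ : (↥Tfin → (Fin d → ℤ)) → ℕ := fun u =>
      ((Finset.range n).filter (fun j => ∑ t ∈ Finset.range j, padT u t = 0)).card with hψ
    have hIF2 := hIF.comp (measurable_of_countable φ) (measurable_of_countable ψ)
    have hφeq : (φ ∘ fun ω (i : ↥Sfin) => W i ω) = fun ω => N n 0 ω := by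
      funext ω
      simp only [Function.comp_apply, hφ]
      rw [hN]
      congr 1
      apply Finset.filter_congr
      intro j hj
      simp only [Finset.mem_range] at hj
      have hsum : ∑ t ∈ Finset.range j, padS (fun i : ↥Sfin => W i ω) t = S j ω := by
        rw [Finset.sum_congr rfl (fun t ht => ?_), ← hS]
        · simp only [Finset.mem_range] at ht
          have hmem : (Sum.inl (t+1) : ℕ ⊕ ℕ) ∈ Sfin := by
            simp only [hSfin, Finset.mem_image, Finset.mem_range]
            exact ⟨t, by omega, rfl⟩
          simp only [hpadS, dif_pos hmem, hW]
          rfl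
      rw [hsum]
    have hψeq : (ψ ∘ fun ω (i : ↥Tfin) => W i ω) = fun ω => N' n 0 ω := by
      funext ω
      simp only [Function.comp_apply, hψ]
      rw [hN']
      congr 1
      apply Finset.filter_congr
      intro j hj
      simp only [Finset.mem_range] at hj
      have hsum : ∑ t ∈ Finset.range j, padT (fun i : ↥Tfin => W i ω) t = S' j ω := by
        rw [Finset.sum_congr rfl (fun t ht => ?_), ← hS']
        · simp only [Finset.mem_range] at ht
          have hmem : (Sum.inr (t+1) : ℕ ⊕ ℕ) ∈ Tfin := by
            simp only [hTfin, Finset.mem_image, Finset.mem_range]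
            exact ⟨t, by omega, rfl⟩
          simp only [hpadT, dif_pos hmem, hW]
          rfl
      rw [hsum]
    rwa [hφeq, hψeq] at hIF2
  -- part 2
  intro c hc
  have hL : (0:ℝ) ≤ Real.log n := Real.log_nonneg (by exact_mod_cast hn)
  have hcL : (0:ℝ) ≤ c / Real.log n := div_nonneg hc.le hL
  set L := Real.log n with hLdef
  set u : ℕ → ℝ := fun x => Real.exp (c * (x:ℝ) / L) with hu
  have humono : ∀ {a b : ℕ}, a ≤ b → u a ≤ u b := by
    intro a b hab
    simp only [hu]
    apply Real.exp_le_exp.2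
    rw [mul_div_right_comm, mul_div_right_comm]
    exact mul_le_mul_of_nonneg_left (by exact_mod_cast hab) hcL
  have hN_le : ∀ a x ω, N a x ω ≤ a := by
    intro a x ω
    rw [hN]
    exact le_trans (Finset.card_filter_le _ _) (by simp)
  have hN'_le : ∀ a x ω, N' a x ω ≤ a := by
    intro a x ω
    rw [hN']
    exact le_trans (Finset.card_filter_le _ _) (by simp)
  -- step 1: identdistrib transfer
  have step1 : ∫ ω, Real.exp (c * (N n (S k ω) ω : ℝ) / L) ∂μ =
      ∫ ω, Real.exp (c * ((N (k+1) 0 ω + N' (n-k) 0 ω - 1 : ℕ) : ℝ) / L) ∂μ := by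
    have h := (part1.comp (measurable_of_countable u)).integral_eq
    simpa only [Function.comp, hu] using h
  -- pointwise bound
  have hpt : ∀ ω, Real.exp (c * ((N (k+1) 0 ω + N' (n-k) 0 ω - 1 : ℕ) : ℝ) / L) ≤
      Real.exp (c * (N n 0 ω : ℝ) / L) * Real.exp (c * (N' n 0 ω : ℝ) / L) := by
    intro ω
    rw [← Real.exp_add]
    apply Real.exp_le_exp.2
    rw [mul_div_right_comm, mul_div_right_comm, mul_div_right_comm, ← mul_add]
    apply mul_le_mul_of_nonneg_left _ hcL
    have h1 : N (k+1) 0 ω ≤ N n 0 ω := by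
      rw [hN, hN]
      exact Finset.card_le_card (Finset.filter_subset_filter _
        (Finset.range_subset_range.2 hkn))
    have h2 : N' (n-k) 0 ω ≤ N' n 0 ω := by
      rw [hN', hN']
      exact Finset.card_le_card (Finset.filter_subset_filter _
        (Finset.range_subset_range.2 (by omega)))
    have hle : (N (k+1) 0 ω + N' (n-k) 0 ω - 1 : ℕ) ≤ N n 0 ω + N' n 0 ω := by omega
    calc ((N (k+1) 0 ω + N' (n-k) 0 ω - 1 : ℕ) : ℝ) ≤ ((N n 0 ω + N' n 0 ω : ℕ) : ℝ) := by
          exact_mod_cast hle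
      _ = (N n 0 ω : ℝ) + (N' n 0 ω : ℝ) := by push_cast; ring
  -- integrability facts
  have measExp1 : Measurable
      (fun ω => Real.exp (c * ((N (k+1) 0 ω + N' (n-k) 0 ω - 1 : ℕ) : ℝ) / L)) := by
    apply Measurable.comp (measurable_of_countable u)
    exact ((measN (k+1) 0).add (measN' (n-k) 0)).sub measurable_const
  have measExpN : Measurable (fun ω => Real.exp (c * (N n 0 ω : ℝ) / L)) :=
    (measurable_of_countable u).comp (measN n 0)
  have measExpN' : Measurable (fun ω => Real.exp (c * (N' n 0 ω : ℝ) / L)) :=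
    (measurable_of_countable u).comp (measN' n 0)
  have int1 : Integrable
      (fun ω => Real.exp (c * ((N (k+1) 0 ω + N' (n-k) 0 ω - 1 : ℕ) : ℝ) / L)) μ := by
    apply Integrable.mono' (integrable_const (Real.exp (c * ((2*n : ℕ):ℝ) / L)))
      measExp1.aestronglyMeasurable
    apply Filter.Eventually.of_forall
    intro ω
    rw [Real.norm_eq_abs, abs_of_pos (Real.exp_pos _)]
    apply humono
    have := hN_le (k+1) 0 ω
    have := hN'_le (n-k) 0 ω
    omega
  have intProd : Integrable (fun ω => Real.exp (c * (N n 0 ω : ℝ) / L) *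
      Real.exp (c * (N' n 0 ω : ℝ) / L)) μ := by
    apply Integrable.mono' (integrable_const (Real.exp (c * ((2*n : ℕ):ℝ) / L) *
      Real.exp (c * ((2*n : ℕ):ℝ) / L))) (measExpN.mul measExpN').aestronglyMeasurable
    apply Filter.Eventually.of_forall
    intro ω
    rw [Real.norm_eq_abs, Pi.mul_apply, abs_of_pos (mul_pos (Real.exp_pos _) (Real.exp_pos _))]
    apply mul_le_mul (humono (by have := hN_le n 0 ω; omega))
      (humono (by have := hN'_le n 0 ω; omega)) (Real.exp_pos _).le (Real.exp_pos _).le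
  -- independence step
  have hIndepExp : IndepFun (fun ω => Real.exp (c * (N n 0 ω : ℝ) / L))
      (fun ω => Real.exp (c * (N' n 0 ω : ℝ) / L)) μ :=
    hIndepNN.comp (measurable_of_countable u) (measurable_of_countable u)
  have step3 : ∫ ω, Real.exp (c * (N n 0 ω : ℝ) / L) * Real.exp (c * (N' n 0 ω : ℝ) / L) ∂μ
      = (∫ ω, Real.exp (c * (N n 0 ω : ℝ) / L) ∂μ) *
        (∫ ω, Real.exp (c * (N' n 0 ω : ℝ) / L) ∂μ) := by
    have h := hIndepExp.integral_fun_mul_eq_mul_integral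
      measExpN.aestronglyMeasurable measExpN'.aestronglyMeasurable
    simpa only [Pi.mul_apply] using h
  have step4 : ∫ ω, Real.exp (c * (N' n 0 ω : ℝ) / L) ∂μ =
      ∫ ω, Real.exp (c * (N n 0 ω : ℝ) / L) ∂μ := by
    have h := (ident2.comp (measurable_of_countable u)).integral_eq
    simpa only [Function.comp, hu] using h
  calc ∫ ω, Real.exp (c * (N n (S k ω) ω : ℝ) / L) ∂μ
      = ∫ ω, Real.exp (c * ((N (k+1) 0 ω + N' (n-k) 0 ω - 1 : ℕ) : ℝ) / L) ∂μ := step1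
    _ ≤ ∫ ω, Real.exp (c * (N n 0 ω : ℝ) / L) * Real.exp (c * (N' n 0 ω : ℝ) / L) ∂μ :=
        integral_mono int1 intProd hpt
    _ = (∫ ω, Real.exp (c * (N n 0 ω : ℝ) / L) ∂μ) *
        (∫ ω, Real.exp (c * (N' n 0 ω : ℝ) / L) ∂μ) := step3
    _ = (∫ ω, Real.exp (c * (N n 0 ω : ℝ) / L) ∂μ) ^ (2:ℕ) := by
        rw [step4]; ring
end
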